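/- Let n ≥ 1 and 1 ≤ k ≤ n. Every subset b ⊆ ZMod n with |b| = k has orbit G(b) = {b + i : i ∈ ZMod n} (where b + i = {x + i : x ∈ b}) of size exactly n if and only if gcd(n, k) = 1. -/
import Mathlib

set_option linter.unnecessarySimpa false

theorem key_stab (n : ℕ) [NeZero n] (b : Finset (ZMod n)) (d : ZMod n)
    (hd : b.image (· + d) = b) : addOrderOf d ∣ b.card := by
  classical
  set H := AddSubgroup.zmultiples d with hH
  have hfwd : ∀ x ∈ b, x + d ∈ b := by
    intro x hx
    rw [← hd]
    exact Finset.mem_image_of_mem _ hx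
  have hnsmul : ∀ x ∈ b, ∀ m : ℕ, x + m • d ∈ b := by
    intro x hx m
    induction m with
    | zero => simpa using hx
    | succ m ih =>
        have : x + (m + 1) • d = (x + m • d) + d := by
          rw [add_smul, one_smul, add_assoc]
        rw [this]
        exact hfwd _ ih
  have hcl : ∀ x ∈ b, ∀ h ∈ H, x + h ∈ b := by
    intro x hx h hh
    have : h ∈ AddSubmonoid.multiples d := (mem_multiples_iff_mem_zmultiples).2 hh
    obtain ⟨m, rfl⟩ := this
    exact hnsmul x hx m
  let mk : ZMod n → ZMod n ⧸ H := QuotientAddGroup.mk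
  have hcard := Finset.card_eq_sum_card_fiberwise
    (f := mk) (s := b) (t := b.image mk) (fun x hx => Finset.mem_image_of_mem _ hx)
  have hfib : ∀ q ∈ b.image mk, (b.filter (fun y => mk y = q)).card = addOrderOf d := by
    intro q hq
    obtain ⟨x, hx, rfl⟩ := Finset.mem_image.mp hq
    have himg : b.filter (fun y => mk y = mk x)
        = Finset.image (fun h : H => x + (h : ZMod n)) Finset.univ := by
      ext y
      simp only [Finset.mem_filter, Finset.mem_image, Finset.mem_univ, true_and]
      constructor
      · rintro ⟨hy, hmk⟩
        have : -x + y ∈ H := (QuotientAddGroup.eq).1 hmk.symm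
        exact ⟨⟨-x + y, this⟩, by simp⟩
      · rintro ⟨h, rfl⟩
        refine ⟨hcl x hx h h.2, ?_⟩
        have : -x + (x + (h : ZMod n)) ∈ H := by simpa using h.2
        exact ((QuotientAddGroup.eq).2 this).symm
    have hinj : Function.Injective (fun h : H => x + (h : ZMod n)) := by
      intro a c hac
      exact Subtype.ext (add_left_cancel hac)
    rw [himg, Finset.card_image_of_injective _ hinj, Finset.card_univ,
      ← Nat.card_eq_fintype_card, hH, Nat.card_zmultiples]
  rw [Finset.sum_congr rfl hfib, Finset.sum_const, smul_eq_mul] at hcard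
  exact ⟨_, by rw [hcard, mul_comm]⟩

/-- Corollary: every size-`k` subset of `ZMod n` has all `n` cyclic shifts
distinct iff `n` and `k` are relatively prime. -/
theorem all_orbits_full_iff_coprime
    (n : ℕ) [NeZero n] (k : ℕ) (hk1 : 1 ≤ k) (hkn : k ≤ n) :
    (∀ b : Finset (ZMod n), b.card = k →
        (Finset.univ.image fun i : ZMod n => b.image (· + i)).card = n)
      ↔ Nat.gcd n k = 1 := by
  classical
  have hn : 0 < n := Nat.pos_of_ne_zero (NeZero.ne n)
  constructor
  · -- forward: contrapositive via explicit invariant subset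
    intro hall
    by_contra hq1
    set q := Nat.gcd n k with hq
    have hqn : q ∣ n := Nat.gcd_dvd_left n k
    have hqk : q ∣ k := Nat.gcd_dvd_right n k
    have hq0 : 0 < q := Nat.gcd_pos_of_pos_left k hn
    have hq2 : 2 ≤ q := by omega
    set m := n / q with hm
    have hmq : q * m = n := Nat.mul_div_cancel' hqn
    have hm0 : 0 < m := Nat.div_pos (Nat.le_of_dvd hn hqn) hq0
    have hmn : m < n := by nlinarith
    have hkqm : k / q ≤ m := Nat.div_le_div_right hkn
    haveI : NeZero q := ⟨by omega⟩
    haveI : Fact (1 < q) := ⟨by omega⟩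
    -- the invariant subset
    set f : ZMod q × Fin (k / q) → ZMod n :=
      fun p => ((p.1.val * m + p.2.val : ℕ) : ZMod n) with hf
    have hlt : ∀ p : ZMod q × Fin (k / q), p.1.val * m + p.2.val < n := by
      intro p
      have h1 : p.1.val < q := ZMod.val_lt p.1
      have h2 : (p.2 : ℕ) < m := lt_of_lt_of_le p.2.2 hkqm
      calc p.1.val * m + p.2.val < p.1.val * m + m := by omega
        _ = (p.1.val + 1) * m := by ring
        _ ≤ q * m := Nat.mul_le_mul_right m (by omega)
        _ = n := hmq
    have hfinj : Function.Injective f := by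
      intro p1 p2 hpe
      have hv : p1.1.val * m + p1.2.val = p2.1.val * m + p2.2.val := by
        have := congrArg ZMod.val hpe
        rwa [hf, ZMod.val_cast_of_lt (hlt p1), ZMod.val_cast_of_lt (hlt p2)] at this
      have h2a : (p1.2 : ℕ) < m := lt_of_lt_of_le p1.2.2 hkqm
      have h2b : (p2.2 : ℕ) < m := lt_of_lt_of_le p2.2.2 hkqm
      have hr : (p1.2 : ℕ) = (p2.2 : ℕ) := by
        have := congrArg (· % m) hv
        simpa [Nat.mul_add_mod, Nat.mod_eq_of_lt h2a, Nat.mod_eq_of_lt h2b,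
          Nat.add_mul_mod_self_left, Nat.mul_add_mod'] using this
      have hj : p1.1.val = p2.1.val := by
        have hmm : p1.1.val * m = p2.1.val * m := by omega
        exact Nat.eq_of_mul_eq_mul_right hm0 hmm
      exact Prod.ext (ZMod.val_injective q hj) (Fin.ext hr)
    set b : Finset (ZMod n) := Finset.image f Finset.univ with hb
    have hbcard : b.card = k := by
      rw [hb, Finset.card_image_of_injective _ hfinj, Finset.card_univ]
      simp [ZMod.card, Nat.mul_div_cancel' hqk]
    -- invariance under shift by m
    have hshift : ∀ p : ZMod q × Fin (k / q),
        f p + (m : ZMod n) = f (p.1 + 1, p.2) := by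
      intro p
      rw [hf]
      simp only
      rw [← Nat.cast_add, ZMod.natCast_eq_natCast_iff]
      have h1 : (p.1 + 1).val ≡ p.1.val + 1 [MOD q] := by
        rw [ZMod.val_add, ZMod.val_one]
        exact (Nat.mod_modEq _ q)
      calc p.1.val * m + p.2.val + m = (p.1.val + 1) * m + p.2.val := by ring
        _ ≡ (p.1 + 1).val * m + p.2.val [MOD n] := by
            rw [← hmq]
            exact Nat.ModEq.add_right _ ((h1.symm.mul_right' m))
    have hinv : b.image (· + (m : ZMod n)) = b := by
      apply Finset.eq_of_subset_of_card_le
      · intro y hy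
        obtain ⟨x, hx, rfl⟩ := Finset.mem_image.mp hy
        obtain ⟨p, _, rfl⟩ := Finset.mem_image.mp hx
        rw [hshift p]
        exact Finset.mem_image_of_mem _ (Finset.mem_univ _)
      · rw [Finset.card_image_of_injective _ (add_left_injective _)]
    -- derive contradiction
    have horb := hall b hbcard
    have hinjOn : Set.InjOn (fun i : ZMod n => b.image (· + i)) ↑(Finset.univ : Finset (ZMod n)) := by
      rw [← Finset.card_image_iff]
      rw [horb, Finset.card_univ, ZMod.card]
    have hmne : (m : ZMod n) ≠ 0 := by
      rw [Ne, ZMod.natCast_eq_zero_iff]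
      intro hdvd
      exact absurd (Nat.le_of_dvd hm0 hdvd) (not_le.mpr hmn)
    apply hmne
    apply hinjOn (Finset.mem_coe.mpr (Finset.mem_univ _)) (Finset.mem_coe.mpr (Finset.mem_univ _))
    simp only
    rw [hinv]
    simp
  · -- reverse: coprime implies all orbits full
    intro hcop b hb
    have hinj : Function.Injective (fun i : ZMod n => b.image (· + i)) := by
      intro i j hij
      dsimp only at hij
      have hd : b.image (· + (i - j)) = b := by
        have h1 : b.image (· + (i - j)) = (b.image (· + i)).image (· + (-j)) := by
          rw [Finset.image_image]
          congr 1
          funext x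
          simp [sub_eq_add_neg, add_assoc]
        rw [h1, hij, Finset.image_image]
        have : ((· + (-j)) ∘ (· + j)) = (id : ZMod n → ZMod n) := by
          funext x; simp
        rw [this, Finset.image_id]
      have h1 : addOrderOf (i - j) ∣ k := hb ▸ key_stab n b _ hd
      have h2 : addOrderOf (i - j) ∣ n := by
        have := addOrderOf_dvd_card (x := i - j)
        rwa [ZMod.card] at this
      have : addOrderOf (i - j) ∣ 1 := hcop ▸ Nat.dvd_gcd h2 h1
      have h0 : i - j = 0 := AddMonoid.addOrderOf_eq_one_iff.mp (Nat.dvd_one.mp this)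
      exact sub_eq_zero.mp h0
    rw [Finset.card_image_of_injective _ hinj, Finset.card_univ, ZMod.card]
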